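/- Let q ≥ 2, c ≥ 1, and d ≥ 3 be integers, and define F(ẑ) := ln[ (1+(q−1)ẑ)/(1−ẑ) ] + (c−1)·ln[ (1−ẑ^{d−1}) / (1+(q−1)ẑ^{d−1}) ] for ẑ ∈ (−1/(q−1), 1). Then F is differentiable on (−1/(q−1), 1) and F′(ẑ) = q·ξ_{q,c,d}(ẑ) / [ (1−ẑ^{d−1}) · (1+(q−1)ẑ) · (1+(q−1)ẑ^{d−1}) ] for every ẑ ∈ (−1/(q−1), 1). -/

import Mathlib

open Real Set Filter Polynomial
open scoped Classical

set_option maxHeartbeats 2000000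

/-- The polynomial function `ξ_{q,c,d}`. -/
noncomputable def xiF (q c d : ℕ) (z : ℝ) : ℝ :=
  (∑ i ∈ Finset.range (d - 2), z ^ i)
    - (((c : ℝ) - 1) * ((d : ℝ) - 1) - 1) * z ^ (d - 2)
    - ((q : ℝ) - 1) * (((c : ℝ) - 1) * ((d : ℝ) - 1) - 1) * z ^ (d - 1)
    + ((q : ℝ) - 1) * ∑ i ∈ Finset.range (d - 2), z ^ (d + i)

/-- The function
`F(ẑ) = ln[(1+(q−1)ẑ)/(1−ẑ)] + (c−1)·ln[(1−ẑ^{d−1})/(1+(q−1)ẑ^{d−1})]` is differentiable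
on `(−1/(q−1), 1)` with derivative
`q·ξ_{q,c,d}(ẑ)/[(1−ẑ^{d−1})(1+(q−1)ẑ)(1+(q−1)ẑ^{d−1})]`. -/
theorem omega_deriv_aux_hasDerivAt (q c d : ℕ) (hq : 2 ≤ q) (hc : 1 ≤ c) (hd : 3 ≤ d)
    (zh : ℝ) (hzh : zh ∈ Set.Ioo (-(1 / ((q : ℝ) - 1))) 1) :
    HasDerivAt
      (fun z : ℝ => Real.log ((1 + ((q : ℝ) - 1) * z) / (1 - z)) +
        ((c : ℝ) - 1) * Real.log ((1 - z ^ (d - 1)) / (1 + ((q : ℝ) - 1) * z ^ (d - 1))))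
      ((q : ℝ) * xiF q c d zh /
        ((1 - zh ^ (d - 1)) * (1 + ((q : ℝ) - 1) * zh) * (1 + ((q : ℝ) - 1) * zh ^ (d - 1))))
      zh := by
  obtain ⟨e, rfl⟩ : ∃ e, d = e + 3 := ⟨d - 3, by omega⟩
  have hq1 : (1 : ℝ) ≤ (q : ℝ) - 1 := by
    have : (2 : ℝ) ≤ (q : ℝ) := by exact_mod_cast hq
    linarith
  have hqpos : (0 : ℝ) < (q : ℝ) - 1 := by linarith
  obtain ⟨hzl, hzu⟩ := hzh
  have hinv : 1 / ((q : ℝ) - 1) ≤ 1 := by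
    rw [div_le_one hqpos]; linarith
  have hzneg1 : -1 < zh := by linarith
  have habs : |zh| < 1 := abs_lt.mpr ⟨hzneg1, hzu⟩
  have h1z : (0 : ℝ) < 1 - zh := by linarith
  have hB : (0 : ℝ) < 1 + ((q : ℝ) - 1) * zh := by
    have : ((q : ℝ) - 1) * (-(1 / ((q : ℝ) - 1))) < ((q : ℝ) - 1) * zh :=
      mul_lt_mul_of_pos_left hzl hqpos
    rw [mul_neg, mul_one_div, div_self (ne_of_gt hqpos)] at this
    linarith
  have habspow : |zh| ^ (e + 2) ≤ |zh| := by
    apply pow_le_of_le_one (abs_nonneg zh) habs.le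
    omega
  have hA : (0 : ℝ) < 1 - zh ^ (e + 2) := by
    have h1 : zh ^ (e + 2) ≤ |zh ^ (e + 2)| := le_abs_self _
    rw [abs_pow] at h1
    linarith
  have hpow : -(1 / ((q : ℝ) - 1)) < zh ^ (e + 2) := by
    rcases le_or_gt 0 zh with h | h
    · have : 0 ≤ zh ^ (e + 2) := pow_nonneg h _
      have : 0 < 1 / ((q : ℝ) - 1) := by positivity
      linarith
    · have h1 : -|zh ^ (e + 2)| ≤ zh ^ (e + 2) := neg_abs_le _
      rw [abs_pow] at h1
      have h2 : -|zh| ≤ -(|zh| ^ (e + 2)) := by linarith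
      have h3 : -|zh| = zh := by rw [abs_of_neg h]; ring
      linarith
  have hC : (0 : ℝ) < 1 + ((q : ℝ) - 1) * zh ^ (e + 2) := by
    have : ((q : ℝ) - 1) * (-(1 / ((q : ℝ) - 1))) < ((q : ℝ) - 1) * zh ^ (e + 2) :=
      mul_lt_mul_of_pos_left hpow hqpos
    rw [mul_neg, mul_one_div, div_self (ne_of_gt hqpos)] at this
    linarith
  -- first log term
  have hu1 : HasDerivAt (fun z : ℝ => 1 + ((q : ℝ) - 1) * z) ((q : ℝ) - 1) zh := by
    simpa using ((hasDerivAt_id zh).const_mul ((q : ℝ) - 1)).const_add 1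
  have hv1 : HasDerivAt (fun z : ℝ => 1 - z) (-1) zh := by
    simpa using (hasDerivAt_id zh).const_sub 1
  have hquot1 := hu1.div hv1 (ne_of_gt h1z)
  have hlog1 := hquot1.log (div_ne_zero (ne_of_gt hB) (ne_of_gt h1z))
  -- second log term
  have hpw : HasDerivAt (fun z : ℝ => z ^ (e + 2)) ((e + 2 : ℕ) * zh ^ (e + 1)) zh :=
    hasDerivAt_pow (e + 2) zh
  have hu2 : HasDerivAt (fun z : ℝ => 1 - z ^ (e + 2)) (-((e + 2 : ℕ) * zh ^ (e + 1))) zh :=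
    hpw.const_sub 1
  have hv2 : HasDerivAt (fun z : ℝ => 1 + ((q : ℝ) - 1) * z ^ (e + 2))
      (((q : ℝ) - 1) * ((e + 2 : ℕ) * zh ^ (e + 1))) zh :=
    (hpw.const_mul ((q : ℝ) - 1)).const_add 1
  have hquot2 := hu2.div hv2 (ne_of_gt hC)
  have hlog2 := hquot2.log (div_ne_zero (ne_of_gt hA) (ne_of_gt hC))
  have key := hlog1.add (hlog2.const_mul ((c : ℝ) - 1))
  have hed1 : e + 3 - 1 = e + 2 := rfl
  have hed2 : e + 3 - 2 = e + 1 := rfl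
  rw [hed1]
  convert key using 1
  · rfl
  · rfl
  · rfl
  -- now prove the derivative values agree
  have hz1 : zh - 1 ≠ 0 := by linarith
  have hS : (∑ i ∈ Finset.range (e + 1), zh ^ i) = (zh ^ (e + 1) - 1) / (zh - 1) := by
    rw [eq_div_iff hz1]
    exact geom_sum_mul zh (e + 1)
  have hT : (∑ i ∈ Finset.range (e + 1), zh ^ (e + 3 + i))
      = zh ^ (e + 3) * ∑ i ∈ Finset.range (e + 1), zh ^ i := by
    rw [Finset.mul_sum]
    exact Finset.sum_congr rfl fun i _ => by rw [← pow_add]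
  have hxi : xiF q c (e + 3) zh =
      ((zh ^ (e + 1) - 1) / (zh - 1))
        - (((c : ℝ) - 1) * ((e : ℝ) + 2) - 1) * zh ^ (e + 1)
        - ((q : ℝ) - 1) * (((c : ℝ) - 1) * ((e : ℝ) + 2) - 1) * zh ^ (e + 2)
        + ((q : ℝ) - 1) * (zh ^ (e + 3) * ((zh ^ (e + 1) - 1) / (zh - 1))) := by
    rw [xiF, hed1, hed2, hT, hS]
    push_cast
    ring_nf
  rw [hxi]
  simp only [Pi.div_apply]
  have hB' : 1 + zh * ((q : ℝ) - 1) ≠ 0 := by rw [mul_comm]; exact ne_of_gt hB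
  field_simp
  push_cast
  ring_nf
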